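/- Let G be a connected graph on 2r vertices, r ≥ 2, such that every maximal matching of G is perfect. Then for every edge vw of G, the graph G − {v, w} is connected. -/

import Mathlib

open SimpleGraph

/-- A matching of a simple graph, given as a set of edges: each edge belongs to the
graph, and distinct edges of the matching share no vertex. -/
def EdgeMatching {V : Type*} (G : SimpleGraph V) (M : Set (Sym2 V)) : Prop :=
  M ⊆ G.edgeSet ∧ ∀ e ∈ M, ∀ f ∈ M, e ≠ f → ∀ v : V, v ∈ e → v ∉ f

/-- The set of vertices covered by a set of edges. -/
def mCover {V : Type*} (M : Set (Sym2 V)) : Set V := {v | ∃ e ∈ M, v ∈ e}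

/-- A maximal matching: a matching to which no edge of the graph can be added. -/
def MaximalEdgeMatching {V : Type*} (G : SimpleGraph V) (M : Set (Sym2 V)) : Prop :=
  EdgeMatching G M ∧ ∀ e ∈ G.edgeSet, EdgeMatching G (insert e M) → e ∈ M

section Aux

variable {V : Type*} [Fintype V]

/-- Every matching extends to a maximal matching (finite vertex set). -/
lemma exists_maximal_ext (G : SimpleGraph V) (M0 : Set (Sym2 V)) (h0 : EdgeMatching G M0) :
    ∃ M, MaximalEdgeMatching G M ∧ M0 ⊆ M := by
  classical
  have hfin : ({N | EdgeMatching G N ∧ M0 ⊆ N} : Set (Set (Sym2 V))).Finite := Set.toFinite _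
  obtain ⟨M, hM, hmax⟩ := Set.Finite.exists_maximalFor id _ hfin ⟨M0, h0, subset_rfl⟩
  refine ⟨M, ⟨hM.1, ?_⟩, hM.2⟩
  intro e he hins
  have h := hmax (j := insert e M) ⟨hins, hM.2.trans (Set.subset_insert _ _)⟩ (Set.subset_insert _ _)
  simp only [id] at h
  exact h (Set.mem_insert _ _)

/-- If `e ∈ M` contains a vertex `x` not in `f ∈ M`, then `e` avoids every vertex of `f`. -/
lemma not_mem_of_special {G : SimpleGraph V} {M : Set (Sym2 V)} (hM : EdgeMatching G M)
    (e : Sym2 V) (heM : e ∈ M) (f : Sym2 V) (hfM : f ∈ M) (x : V) (hxe : x ∈ e) (hxf : x ∉ f)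
    (p : V) (hpf : p ∈ f) : p ∉ e := by
  intro hpe
  have hne : e ≠ f := fun h => hxf (h ▸ hxe)
  exact hM.2 e heM f hfM hne p hpe hpf

lemma partner_exists {G : SimpleGraph V} {M : Set (Sym2 V)} (hM : EdgeMatching G M)
    (hcov : mCover M = Set.univ) (z : V) : ∃ y, s(z, y) ∈ M ∧ G.Adj z y := by
  have hz : z ∈ mCover M := hcov ▸ Set.mem_univ z
  obtain ⟨e, heM, hze⟩ := hz
  obtain ⟨y, rfl⟩ := Sym2.mem_iff_exists.mp hze
  exact ⟨y, heM, (G.mem_edgeSet).mp (hM.1 heM)⟩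

/-- A finite set closed under a perfect matching has even cardinality. -/
lemma even_card_closed {G : SimpleGraph V} {M : Set (Sym2 V)} (hM : EdgeMatching G M)
    (hcov : mCover M = Set.univ) :
    ∀ n (K : Finset V), K.card = n →
      (∀ x ∈ K, ∀ e ∈ M, x ∈ e → ∀ y ∈ e, y ∈ K) → Even K.card := by
  classical
  intro n
  induction n using Nat.strong_induction_on with
  | _ n ih =>
    intro K hn hcl
    rcases K.eq_empty_or_nonempty with rfl | ⟨x, hx⟩
    · simp
    · obtain ⟨y, heM, hadj⟩ := partner_exists hM hcov x
      have hxe : x ∈ s(x, y) := Sym2.mem_iff.mpr (Or.inl rfl)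
      have hye : y ∈ s(x, y) := Sym2.mem_iff.mpr (Or.inr rfl)
      have hxy : x ≠ y := hadj.ne
      have hy : y ∈ K := hcl x hx _ heM hxe y hye
      set K' := (K.erase x).erase y with hK'def
      have hK'cl : ∀ z ∈ K', ∀ e ∈ M, z ∈ e → ∀ u ∈ e, u ∈ K' := by
        intro z hz f hfM hzf u huf
        have hzy : z ≠ y := Finset.ne_of_mem_erase hz
        have hzx : z ≠ x := Finset.ne_of_mem_erase (Finset.mem_of_mem_erase hz)
        have hzK : z ∈ K := Finset.mem_of_mem_erase (Finset.mem_of_mem_erase hz)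
        have hzns : z ∉ s(x, y) := by
          rw [Sym2.mem_iff]; rintro (rfl | rfl) <;> simp_all
        have havoid := not_mem_of_special hM f hfM _ heM z hzf hzns
        have hux : u ≠ x := fun h => havoid x hxe (h ▸ huf)
        have huy : u ≠ y := fun h => havoid y hye (h ▸ huf)
        have huK : u ∈ K := hcl z hzK f hfM hzf u huf
        exact Finset.mem_erase.mpr ⟨huy, Finset.mem_erase.mpr ⟨hux, huK⟩⟩
      have hyex : y ∈ K.erase x := Finset.mem_erase.mpr ⟨hxy.symm, hy⟩
      have hcard : K'.card = K.card - 2 := by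
        rw [hK'def, Finset.card_erase_of_mem hyex, Finset.card_erase_of_mem hx]
        omega
      have hK2 : 2 ≤ K.card := by
        have : ({x, y} : Finset V) ⊆ K := by
          intro z hz; rcases Finset.mem_insert.mp hz with rfl | hz
          · exact hx
          · rw [Finset.mem_singleton] at hz; exact hz ▸ hy
        calc 2 = ({x, y} : Finset V).card := (Finset.card_pair hxy).symm
          _ ≤ K.card := Finset.card_le_card this
      have hlt : K.card - 2 < n := by omega
      have heven' : Even K'.card := ih _ (hn ▸ hlt) K' (by omega) hK'cl
      rw [hcard, Nat.even_sub hK2] at heven'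
      exact heven'.mpr (by decide)

variable {G : SimpleGraph V}

/-- Core contradiction: `K` is (the vertex set of) a union of components of `G - {v,w}`,
`v` has a neighbour `c ∈ K` and `w` has a neighbour `d ∉ K ∪ {v,w}`.  Then some maximal
matching is not perfect. -/
lemma contra_main (hmax : ∀ M : Set (Sym2 V), MaximalEdgeMatching G M → mCover M = Set.univ)
    (v w : V) (hvw : G.Adj v w) (K : Finset V)
    (hKS : ∀ z ∈ K, z ≠ v ∧ z ≠ w)
    (hKcl : ∀ z ∈ K, ∀ y, G.Adj z y → y ≠ v → y ≠ w → y ∈ K)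
    (c d : V) (hcK : c ∈ K) (hdK : d ∉ K) (hdv : d ≠ v) (hdw : d ≠ w)
    (hvc : G.Adj v c) (hwd : G.Adj w d) : False := by
  classical
  have hcv : c ≠ v := (hKS c hcK).1
  have hcw : c ≠ w := (hKS c hcK).2
  have hcd : c ≠ d := fun h => hdK (h ▸ hcK)
  have hvwne : v ≠ w := hvw.ne
  -- Part 1: a perfect matching containing the edge vw, giving Even K.card
  have hsingle : EdgeMatching G ({s(v, w)} : Set (Sym2 V)) := by
    constructor
    · intro e he; rw [Set.mem_singleton_iff] at he; rw [he]; exact hvw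
    · intro e he f hf hef p _ _
      rw [Set.mem_singleton_iff] at he hf
      exact hef (he.trans hf.symm)
  obtain ⟨M1, hM1max, hsub1⟩ := exists_maximal_ext G _ hsingle
  have hM1 := hM1max.1
  have hcov1 := hmax M1 hM1max
  have hvwM1 : s(v, w) ∈ M1 := hsub1 rfl
  have heven : Even K.card := by
    refine even_card_closed hM1 hcov1 K.card K rfl ?_
    intro x hx e heM hxe y hye
    obtain ⟨u, rfl⟩ := Sym2.mem_iff_exists.mp hxe
    have hxv := (hKS x hx).1
    have hxw := (hKS x hx).2
    have hxns : x ∉ s(v, w) := by rw [Sym2.mem_iff]; rintro (rfl | rfl) <;> simp_all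
    have havoid := not_mem_of_special hM1 _ heM _ hvwM1 x (Sym2.mem_iff.mpr (Or.inl rfl)) hxns
    have huv : u ≠ v := fun h =>
      havoid v (Sym2.mem_iff.mpr (Or.inl rfl)) (Sym2.mem_iff.mpr (Or.inr h.symm))
    have huw : u ≠ w := fun h =>
      havoid w (Sym2.mem_iff.mpr (Or.inr rfl)) (Sym2.mem_iff.mpr (Or.inr h.symm))
    have hadj : G.Adj x u := (G.mem_edgeSet).mp (hM1.1 heM)
    have huK : u ∈ K := hKcl x hx u hadj huv huw
    rcases Sym2.mem_iff.mp hye with rfl | rfl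
    · exact hx
    · exact huK
  -- Part 2: a perfect matching containing edges vc and wd, giving Even (K.erase c).card
  have hvd : v ≠ d := hdv.symm
  have hpair : EdgeMatching G ({s(v, c), s(w, d)} : Set (Sym2 V)) := by
    constructor
    · intro e he
      rcases Set.mem_insert_iff.mp he with rfl | he
      · exact hvc
      · rw [Set.mem_singleton_iff] at he; rw [he]; exact hwd
    · intro e he f hf hef p hpe hpf
      rcases Set.mem_insert_iff.mp he with rfl | he
      · rcases Set.mem_insert_iff.mp hf with rfl | hf
        · exact hef rfl
        · rw [Set.mem_singleton_iff] at hf; subst hf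
          rcases Sym2.mem_iff.mp hpe with rfl | rfl <;>
            rcases Sym2.mem_iff.mp hpf with h | h
          · exact hvwne h
          · exact hvd h
          · exact hcw h
          · exact hcd h
      · rw [Set.mem_singleton_iff] at he; subst he
        rcases Set.mem_insert_iff.mp hf with rfl | hf
        · rcases Sym2.mem_iff.mp hpe with rfl | rfl <;>
            rcases Sym2.mem_iff.mp hpf with h | h
          · exact hvwne h.symm
          · exact hcw h.symm
          · exact hvd h.symm
          · exact hcd h.symm
        · rw [Set.mem_singleton_iff] at hf; subst hf
          exact hef rfl
  obtain ⟨M2, hM2max, hsub2⟩ := exists_maximal_ext G _ hpair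
  have hM2 := hM2max.1
  have hcov2 := hmax M2 hM2max
  have hvcM2 : s(v, c) ∈ M2 := hsub2 (Set.mem_insert _ _)
  have hwdM2 : s(w, d) ∈ M2 := hsub2 (Set.mem_insert_of_mem _ rfl)
  have hodd : Even (K.erase c).card := by
    refine even_card_closed hM2 hcov2 (K.erase c).card _ rfl ?_
    intro x hx e heM hxe y hye
    obtain ⟨u, rfl⟩ := Sym2.mem_iff_exists.mp hxe
    have hxc : x ≠ c := Finset.ne_of_mem_erase hx
    have hxK : x ∈ K := Finset.mem_of_mem_erase hx
    have hxv := (hKS x hxK).1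
    have hxw := (hKS x hxK).2
    have hxd : x ≠ d := fun h => hdK (h ▸ hxK)
    have hxns1 : x ∉ s(v, c) := by rw [Sym2.mem_iff]; rintro (rfl | rfl) <;> simp_all
    have hxns2 : x ∉ s(w, d) := by rw [Sym2.mem_iff]; rintro (rfl | rfl) <;> simp_all
    have havoid1 := not_mem_of_special hM2 _ heM _ hvcM2 x (Sym2.mem_iff.mpr (Or.inl rfl)) hxns1
    have havoid2 := not_mem_of_special hM2 _ heM _ hwdM2 x (Sym2.mem_iff.mpr (Or.inl rfl)) hxns2
    have huv : u ≠ v := fun h =>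
      havoid1 v (Sym2.mem_iff.mpr (Or.inl rfl)) (Sym2.mem_iff.mpr (Or.inr h.symm))
    have huc : u ≠ c := fun h =>
      havoid1 c (Sym2.mem_iff.mpr (Or.inr rfl)) (Sym2.mem_iff.mpr (Or.inr h.symm))
    have huw : u ≠ w := fun h =>
      havoid2 w (Sym2.mem_iff.mpr (Or.inl rfl)) (Sym2.mem_iff.mpr (Or.inr h.symm))
    have hadj : G.Adj x u := (G.mem_edgeSet).mp (hM2.1 heM)
    have huK : u ∈ K := hKcl x hxK u hadj huv huw
    rcases Sym2.mem_iff.mp hye with rfl | rfl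
    · exact hx
    · exact Finset.mem_erase.mpr ⟨huc, huK⟩
  have h1 : 1 ≤ K.card := Finset.card_pos.mpr ⟨c, hcK⟩
  rw [Finset.card_erase_of_mem hcK, Nat.even_sub h1] at hodd
  exact (by decide : ¬ Even 1) (hodd.mp heven)

/-- The case where both special neighbours are adjacent to the same vertex `v`. -/
lemma contra_same (hmax : ∀ M : Set (Sym2 V), MaximalEdgeMatching G M → mCover M = Set.univ)
    (v w : V) (hvw : G.Adj v w) (Ka Kb : Finset V)
    (hKaS : ∀ z ∈ Ka, z ≠ v ∧ z ≠ w)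
    (hKacl : ∀ z ∈ Ka, ∀ y, G.Adj z y → y ≠ v → y ≠ w → y ∈ Ka)
    (hKbS : ∀ z ∈ Kb, z ≠ v ∧ z ≠ w)
    (hKbcl : ∀ z ∈ Kb, ∀ y, G.Adj z y → y ≠ v → y ≠ w → y ∈ Kb)
    (hdisj : ∀ z, z ∈ Ka → z ∉ Kb)
    (a' b' : V) (ha : a' ∈ Ka) (hb : b' ∈ Kb) (hva : G.Adj v a') (hvb : G.Adj v b') :
    False := by
  classical
  have hav := (hKaS a' ha).1
  have haw := (hKaS a' ha).2
  have hsingle : EdgeMatching G ({s(v, a')} : Set (Sym2 V)) := by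
    constructor
    · intro e he; rw [Set.mem_singleton_iff] at he; rw [he]; exact hva
    · intro e he f hf hef p _ _
      rw [Set.mem_singleton_iff] at he hf
      exact hef (he.trans hf.symm)
  obtain ⟨M1, hM1max, hsub1⟩ := exists_maximal_ext G _ hsingle
  have hM1 := hM1max.1
  have hcov1 := hmax M1 hM1max
  have hvaM1 : s(v, a') ∈ M1 := hsub1 rfl
  obtain ⟨y, hyM, hwy⟩ := partner_exists hM1 hcov1 w
  have hwns : w ∉ s(v, a') := by
    rw [Sym2.mem_iff]; rintro (rfl | rfl)
    · exact hvw.ne rfl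
    · exact haw rfl
  have havoid := not_mem_of_special hM1 _ hyM _ hvaM1 w (Sym2.mem_iff.mpr (Or.inl rfl)) hwns
  have hyv : y ≠ v := fun h =>
    havoid v (Sym2.mem_iff.mpr (Or.inl rfl)) (Sym2.mem_iff.mpr (Or.inr h.symm))
  have hya : y ≠ a' := fun h =>
    havoid a' (Sym2.mem_iff.mpr (Or.inr rfl)) (Sym2.mem_iff.mpr (Or.inr h.symm))
  have hyw : y ≠ w := fun h => hwy.ne h.symm
  by_cases hyKa : y ∈ Ka
  · exact contra_main hmax v w hvw Kb hKbS hKbcl b' y hb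
      (fun h => hdisj y hyKa h) hyv hyw hvb hwy
  · exact contra_main hmax v w hvw Ka hKaS hKacl a' y ha hyKa hyv hyw hva hwy

end Aux

/-- in a connected graph on 2r vertices (r ≥ 2) in which every maximal
matching is perfect, removing the two endpoints of any edge leaves a connected graph. -/
theorem removing_edge_endpoints_connected {V : Type*} [Fintype V]
    (G : SimpleGraph V) (r : ℕ) (hr : 2 ≤ r) (hcard : Fintype.card V = 2 * r)
    (hconn : G.Connected)
    (hmax : ∀ M : Set (Sym2 V), MaximalEdgeMatching G M → mCover M = Set.univ) :
    ∀ v w : V, G.Adj v w → (G.induce {x : V | x ≠ v ∧ x ≠ w}).Connected := by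
  classical
  intro v w hvw
  by_contra hnc
  set S : Set V := {x : V | x ≠ v ∧ x ≠ w} with hSdef
  have hmemS : ∀ x : V, x ∈ S ↔ x ≠ v ∧ x ≠ w := fun x => Iff.rfl
  -- S is nonempty
  have hSne : ∃ x, x ∈ S := by
    by_contra h
    push_neg at h
    have hsub : (Finset.univ : Finset V) ⊆ {v, w} := by
      intro x _
      have hx := h x
      rw [hmemS] at hx
      push_neg at hx
      by_cases hxv : x = v
      · exact Finset.mem_insert.mpr (Or.inl hxv)
      · exact Finset.mem_insert.mpr (Or.inr (Finset.mem_singleton.mpr (hx hxv)))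
    have : Fintype.card V ≤ 2 := by
      calc Fintype.card V = (Finset.univ : Finset V).card := rfl
        _ ≤ ({v, w} : Finset V).card := Finset.card_le_card hsub
        _ ≤ 2 := Finset.card_insert_le _ _ |>.trans (by simp)
    omega
  obtain ⟨x0, hx0⟩ := hSne
  have hSnonempty : Nonempty ↥S := ⟨⟨x0, hx0⟩⟩
  have hnp : ¬ (G.induce S).Preconnected := fun hp => hnc ((connected_iff _).mpr ⟨hp, hSnonempty⟩)
  rw [SimpleGraph.Preconnected] at hnp
  push_neg at hnp
  obtain ⟨a, b, hab⟩ := hnp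
  -- reachability relation on V through S
  set R : V → V → Prop :=
    fun x y => ∃ (hx : x ∈ S) (hy : y ∈ S), (G.induce S).Reachable ⟨x, hx⟩ ⟨y, hy⟩ with hRdef
  have hRrefl : ∀ x (hx : x ∈ S), R x x := fun x hx => ⟨hx, hx, Reachable.refl _⟩
  have hRsymm : ∀ {x y}, R x y → R y x := by
    rintro x y ⟨hx, hy, h⟩; exact ⟨hy, hx, h.symm⟩
  have hRtrans : ∀ {x y z}, R x y → R y z → R x z := by
    rintro x y z ⟨hx, hy, h1⟩ ⟨hy', hz, h2⟩
    exact ⟨hx, hz, h1.trans h2⟩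
  have hRstep : ∀ x y (hx : x ∈ S) (hy : y ∈ S), G.Adj x y → R x y := by
    intro x y hx hy hadj
    refine ⟨hx, hy, Adj.reachable ?_⟩
    exact hadj
  -- walking to v, find a vertex of the same component adjacent to v or w
  have hwalk : ∀ (x t : V), G.Walk x t → x ∈ S → (t = v ∨ t = w) →
      ∃ y, y ∈ S ∧ R x y ∧ (G.Adj v y ∨ G.Adj w y) := by
    intro x t p
    induction p with
    | nil =>
      intro hx ht
      rcases ht with rfl | rfl
      · exact absurd rfl hx.1
      · exact absurd rfl hx.2
    | @cons x' z t' h q ih =>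
      intro hx ht
      by_cases hzv : z = v
      · exact ⟨x', hx, hRrefl x' hx, Or.inl (hzv ▸ h.symm)⟩
      · by_cases hzw : z = w
        · exact ⟨x', hx, hRrefl x' hx, Or.inr (hzw ▸ h.symm)⟩
        · have hz : z ∈ S := ⟨hzv, hzw⟩
          obtain ⟨y, hy, hRzy, hadj⟩ := ih hz ht
          exact ⟨y, hy, hRtrans (hRstep x' z hx hz h) hRzy, hadj⟩
  obtain ⟨pa⟩ := hconn.preconnected a.val v
  obtain ⟨pb⟩ := hconn.preconnected b.val v
  obtain ⟨a', ha'S, hRaa', hadja⟩ := hwalk a.val v pa a.prop (Or.inl rfl)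
  obtain ⟨b', hb'S, hRbb', hadjb⟩ := hwalk b.val v pb b.prop (Or.inl rfl)
  -- a' and b' lie in different components
  have hnRab : ¬ R a' b' := by
    intro h
    have hRab : R a.val b.val := hRtrans hRaa' (hRtrans h (hRsymm hRbb'))
    obtain ⟨h1, h2, hreach⟩ := hRab
    exact hab hreach
  -- components as finsets
  set Ka : Finset V := Finset.univ.filter (fun z => z ∈ S ∧ R z a') with hKadef
  set Kb : Finset V := Finset.univ.filter (fun z => z ∈ S ∧ R z b') with hKbdef
  have hmemKa : ∀ z, z ∈ Ka ↔ z ∈ S ∧ R z a' := by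
    intro z; rw [hKadef, Finset.mem_filter]; simp
  have hmemKb : ∀ z, z ∈ Kb ↔ z ∈ S ∧ R z b' := by
    intro z; rw [hKbdef, Finset.mem_filter]; simp
  have haKa : a' ∈ Ka := (hmemKa a').mpr ⟨ha'S, hRrefl a' ha'S⟩
  have hbKb : b' ∈ Kb := (hmemKb b').mpr ⟨hb'S, hRrefl b' hb'S⟩
  have hKaS : ∀ z ∈ Ka, z ≠ v ∧ z ≠ w := fun z hz => ((hmemKa z).mp hz).1
  have hKbS : ∀ z ∈ Kb, z ≠ v ∧ z ≠ w := fun z hz => ((hmemKb z).mp hz).1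
  have hKacl : ∀ z ∈ Ka, ∀ y, G.Adj z y → y ≠ v → y ≠ w → y ∈ Ka := by
    intro z hz y hadj hyv hyw
    obtain ⟨hzS, hzR⟩ := (hmemKa z).mp hz
    have hyS : y ∈ S := ⟨hyv, hyw⟩
    exact (hmemKa y).mpr ⟨hyS, hRtrans (hRstep y z hyS hzS hadj.symm) hzR⟩
  have hKbcl : ∀ z ∈ Kb, ∀ y, G.Adj z y → y ≠ v → y ≠ w → y ∈ Kb := by
    intro z hz y hadj hyv hyw
    obtain ⟨hzS, hzR⟩ := (hmemKb z).mp hz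
    have hyS : y ∈ S := ⟨hyv, hyw⟩
    exact (hmemKb y).mpr ⟨hyS, hRtrans (hRstep y z hyS hzS hadj.symm) hzR⟩
  have hdisj : ∀ z, z ∈ Ka → z ∉ Kb := by
    intro z hza hzb
    obtain ⟨_, h1⟩ := (hmemKa z).mp hza
    obtain ⟨_, h2⟩ := (hmemKb z).mp hzb
    exact hnRab (hRtrans (hRsymm h1) h2)
  have hbKa : b' ∉ Ka := by
    intro h
    exact hnRab (hRsymm ((hmemKa b').mp h).2)
  have hb'v : b' ≠ v := hb'S.1
  have hb'w : b' ≠ w := hb'S.2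
  -- case analysis
  rcases hadja with hva | hwa
  · rcases hadjb with hvb | hwb
    · -- both adjacent to v
      exact contra_same hmax v w hvw Ka Kb hKaS hKacl hKbS hKbcl hdisj a' b' haKa hbKb hva hvb
    · -- a' ~ v, b' ~ w
      exact contra_main hmax v w hvw Ka hKaS hKacl a' b' haKa hbKa hb'v hb'w hva hwb
  · rcases hadjb with hvb | hwb
    · -- a' ~ w, b' ~ v : swap the roles of v and w
      exact contra_main hmax w v hvw.symm Ka
        (fun z hz => ⟨(hKaS z hz).2, (hKaS z hz).1⟩)
        (fun z hz y hadj hyw hyv => hKacl z hz y hadj hyv hyw)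
        a' b' haKa hbKa hb'w hb'v hwa hvb
    · -- both adjacent to w
      exact contra_same hmax w v hvw.symm Ka Kb
        (fun z hz => ⟨(hKaS z hz).2, (hKaS z hz).1⟩)
        (fun z hz y hadj hyw hyv => hKacl z hz y hadj hyv hyw)
        (fun z hz => ⟨(hKbS z hz).2, (hKbS z hz).1⟩)
        (fun z hz y hadj hyw hyv => hKbcl z hz y hadj hyv hyw)
        hdisj a' b' haKa hbKb hwa hwb
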